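/- arXiv:2304.00375 — 4 statements merged into one kernel-verified Lean document; each statement's English description precedes it below -/
import Mathlib

section
/- Define J^T(x) = min over control sequences of [∑_{t=0}^{T-1} c(x_t,u_t) + Φ(x_T)] subject to x_{t+1} = f(x_t,u_t), x_0 = x, where Φ ≥ 0. If T' < T and for every state y, Φ(y) ≥ min_u [c(y,u) + Φ(f(y,u))], then J^{T}(x) ≤ J^{T'}(x), i.e., the optimal cost with terminal cost Φ is monotone nonincreasing in the horizon T. -/
/-- Trajectory of the discrete-time system `x_{t+1} = f x_t u_t` from `x` under controls `u`. -/
def traj {X U : Type*} (f : X → U → X) (x : X) (u : ℕ → U) : ℕ → X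
  | 0 => x
  | t + 1 => f (traj f x u t) (u t)

/-- Total cost of horizon `T` with stage cost `c` and terminal cost `Φ`. -/
def cost {X U : Type*} (f : X → U → X) (c : X → U → ℝ) (Φ : X → ℝ)
    (x : X) (u : ℕ → U) (T : ℕ) : ℝ :=
  (∑ t ∈ Finset.range T, c (traj f x u t) (u t)) + Φ (traj f x u T)

/-- Optimal finite-horizon value with terminal cost `Φ`. -/
noncomputable def val {X U : Type*} (f : X → U → X) (c : X → U → ℝ) (Φ : X → ℝ)
    (x : X) (T : ℕ) : ℝ :=
  sInf (Set.range fun u : ℕ → U => cost f c Φ x u T)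

lemma traj_congr {X U : Type*} (f : X → U → X) (x : X) (u u' : ℕ → U)
    (T : ℕ) (h : ∀ t < T, u t = u' t) : ∀ t ≤ T, traj f x u t = traj f x u' t := by
  intro t ht
  induction t with
  | zero => rfl
  | succ n ih =>
    simp only [traj]
    rw [ih (Nat.le_of_succ_le ht), h n (Nat.lt_of_succ_le ht)]

lemma val_succ_le {X U : Type*} [Nonempty U]
    (f : X → U → X) (c : X → U → ℝ) (Φ : X → ℝ)
    (hc : ∀ x u, 0 ≤ c x u) (hΦ : ∀ x, 0 ≤ Φ x)
    (hCLF : ∀ y, ∃ u, c y u + Φ (f y u) ≤ Φ y)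
    (x : X) (T : ℕ) : val f c Φ x (T + 1) ≤ val f c Φ x T := by
  have hbdd : BddBelow (Set.range fun u : ℕ → U => cost f c Φ x u (T + 1)) := by
    refine ⟨0, ?_⟩
    rintro _ ⟨u, rfl⟩
    exact add_nonneg (Finset.sum_nonneg fun t _ => hc _ _) (hΦ _)
  apply le_csInf (Set.range_nonempty _)
  rintro _ ⟨u, rfl⟩
  obtain ⟨us, hus⟩ := hCLF (traj f x u T)
  set u' : ℕ → U := fun t => if t = T then us else u t with hu'
  have hagree : ∀ t < T, u' t = u t := fun t ht => if_neg (Nat.ne_of_lt ht)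
  have htraj : ∀ t ≤ T, traj f x u' t = traj f x u t :=
    traj_congr f x u' u T hagree
  have hle : cost f c Φ x u' (T + 1) ≤ cost f c Φ x u T := by
    unfold cost
    rw [Finset.sum_range_succ]
    have hsum : ∀ t ∈ Finset.range T,
        c (traj f x u' t) (u' t) = c (traj f x u t) (u t) := by
      intro t ht
      rw [htraj t (Finset.mem_range.mp ht).le, hagree t (Finset.mem_range.mp ht)]
    rw [Finset.sum_congr rfl hsum]
    have h1 : traj f x u' T = traj f x u T := htraj T le_rfl
    have h2 : u' T = us := if_pos rfl
    have h3 : traj f x u' (T + 1) = f (traj f x u T) us := by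
      simp only [traj, h1, h2]
    rw [h3, h2, h1, add_assoc]
    exact add_le_add_right hus _
  exact le_trans (csInf_le hbdd ⟨u', rfl⟩) hle

/-- If the terminal cost `Φ` satisfies the one-step control-Lyapunov decrease condition,
then the optimal finite-horizon value is nonincreasing in the horizon. -/
theorem stmt_3 {X U : Type*} [Nonempty U]
    (f : X → U → X) (c : X → U → ℝ) (Φ : X → ℝ)
    (hc : ∀ x u, 0 ≤ c x u) (hΦ : ∀ x, 0 ≤ Φ x)
    (hCLF : ∀ y, ∃ u, c y u + Φ (f y u) ≤ Φ y)
    (x : X) (T' T : ℕ) (hT : T' < T) :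
    val f c Φ x T ≤ val f c Φ x T' := by
  induction T with
  | zero => omega
  | succ n ih =>
    rcases Nat.lt_succ_iff_lt_or_eq.mp hT with h | h
    · exact le_trans (val_succ_le f c Φ hc hΦ hCLF x n) (ih h)
    · subst h
      exact val_succ_le f c Φ hc hΦ hCLF x T'
end

section
/- Suppose J : X → ℝ≥0 satisfies J(x) = min_u [c(x,u) + J(f(x,u))] for all x outside a set Ω, c(x,u) ≥ Δ > 0 for all x ∉ Ω and all u, and J < ∞. Then any trajectory following the Bellman-optimal control from x ∉ Ω enters Ω within at most ⌈J(x)/Δ⌉ steps. -/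
/-- If `J ≥ 0` satisfies the Bellman equation outside `Ω` (with the minimizing control
followed along the trajectory), and the stage cost is at least `Δ > 0` outside `Ω`, then
the Bellman-optimal trajectory from `x₀ ∉ Ω` enters `Ω` within `⌈J(x₀)/Δ⌉` steps. -/
theorem stmt_12 {X U : Type*}
    (f : X → U → X) (c : X → U → ℝ) (J : X → ℝ) (Ω : Set X) (Δ : ℝ)
    (hΔ : 0 < Δ)
    (hJ_nonneg : ∀ y, 0 ≤ J y)
    (hc_low : ∀ y u, y ∉ Ω → Δ ≤ c y u)
    (hbellmin : ∀ y ∉ Ω, ∃ u, J y = c y u + J (f y u) ∧ ∀ u', J y ≤ c y u' + J (f y u'))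
    (x : ℕ → X) (u : ℕ → U)
    (hx0 : x 0 ∉ Ω)
    (hdyn : ∀ t, x (t + 1) = f (x t) (u t))
    (hopt : ∀ t, x t ∉ Ω →
      J (x t) = c (x t) (u t) + J (x (t + 1)) ∧ ∀ u', J (x t) ≤ c (x t) u' + J (f (x t) u')) :
    ∃ t : ℕ, t ≤ ⌈J (x 0) / Δ⌉₊ ∧ x t ∈ Ω := by
  by_contra h
  push_neg at h
  have key : ∀ n : ℕ, (∀ t < n, x t ∉ Ω) → n * Δ + J (x n) ≤ J (x 0) := by
    intro n
    induction n with
    | zero => intro _; simp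
    | succ k ih =>
      intro hall
      have hk : ∀ t < k, x t ∉ Ω := fun t ht => hall t (ht.trans (Nat.lt_succ_self k))
      have hxk : x k ∉ Ω := hall k (Nat.lt_succ_self k)
      have h1 := (hopt k hxk).1
      have h2 := hc_low (x k) (u k) hxk
      have := ih hk
      push_cast
      nlinarith [hJ_nonneg (x (k+1))]
  set N := ⌈J (x 0) / Δ⌉₊ with hN
  have hall : ∀ t < N + 1, x t ∉ Ω := fun t ht => h t (Nat.lt_succ_iff.mp ht)
  have hkey := key (N + 1) hall
  have h1 : ((N : ℝ) + 1) * Δ ≤ J (x 0) := by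
    push_cast at hkey ⊢
    nlinarith [hJ_nonneg (x (N + 1))]
  have h2 : (N : ℝ) + 1 ≤ J (x 0) / Δ := by
    rw [le_div_iff₀ hΔ]; linarith
  have h3 : J (x 0) / Δ ≤ (N : ℝ) := Nat.le_ceil _
  linarith
end

section
/- Let Ω be contained in the region of attraction D of a feedback law κ (i.e., for every y ∈ Ω the closed-loop trajectory y_{t+1} = f(y_t, κ(y_t)) converges to 0 and stays in D), and suppose a value function J satisfies the Bellman equation with positive stage cost outside Ω, so that every optimal trajectory from any x reaches Ω in finite time. Then under the combined policy (Bellman-optimal control outside Ω, κ inside Ω), every trajectory converges to the origin; i.e., the origin is globally attractive. -/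
open Classical in
/-- Global attractivity of the origin under the combined policy: Bellman-optimal control
`π` outside `Ω` (which, since `J` satisfies the Bellman equation with stage cost at least
`Δ > 0` outside `Ω`, forces the trajectory to reach `Ω` in finite time) and the feedback
`κ` once `Ω` (contained in the region of attraction `D` of `κ`) has been reached. -/
theorem stmt_13 {X U : Type*} [TopologicalSpace X] [Zero X]
    (f : X → U → X) (κ : X → U) (π : X → U) (Ω D : Set X)
    (J : X → ℝ) (c : X → U → ℝ) (Δ : ℝ)
    (hΩD : Ω ⊆ D)
    (hinv : ∀ y ∈ D, f y (κ y) ∈ D)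
    (hattr : ∀ y ∈ D,
      Filter.Tendsto (fun t => (fun z => f z (κ z))^[t] y) Filter.atTop (nhds 0))
    (hΔ : 0 < Δ)
    (hc_low : ∀ y u, y ∉ Ω → Δ ≤ c y u)
    (hJ_nonneg : ∀ y, 0 ≤ J y)
    (hbell : ∀ y ∉ Ω, J y = c y (π y) + J (f y (π y)))
    (x : ℕ → X)
    (hdyn : ∀ t, x (t + 1) =
      if ∃ s ≤ t, x s ∈ Ω then f (x t) (κ (x t)) else f (x t) (π (x t))) :
    Filter.Tendsto x Filter.atTop (nhds 0) := by
  -- Step 1: the trajectory reaches Ω in finite time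
  have hreach : ∃ s, x s ∈ Ω := by
    by_contra h
    push_neg at h
    have hstep : ∀ t, x (t + 1) = f (x t) (π (x t)) := by
      intro t
      rw [hdyn t, if_neg]
      rintro ⟨s, _, hs⟩
      exact h s hs
    have hJ : ∀ n : ℕ, (n : ℝ) * Δ + J (x n) ≤ J (x 0) := by
      intro n
      induction n with
      | zero => simp
      | succ n ih =>
        have h1 : J (x n) = c (x n) (π (x n)) + J (x (n + 1)) := by
          rw [hbell _ (h n), hstep n]
        have h2 : Δ ≤ c (x n) (π (x n)) := hc_low _ _ (h n)
        push_cast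
        push_cast at ih
        linarith
    obtain ⟨n, hn⟩ := exists_nat_gt (J (x 0) / Δ)
    have h1 := hJ n
    have h2 := hJ_nonneg (x n)
    have : J (x 0) / Δ < (n : ℝ) := hn
    have : J (x 0) < (n : ℝ) * Δ := by
      rwa [div_lt_iff₀ hΔ] at this
    linarith
  obtain ⟨s₀, hs₀⟩ := hreach
  -- Step 2: after time s₀, the dynamics are the closed-loop κ dynamics
  have hiter : ∀ k : ℕ, x (s₀ + k) = (fun z => f z (κ z))^[k] (x s₀) := by
    intro k
    induction k with
    | zero => simp
    | succ k ih =>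
      have : x (s₀ + k + 1) = f (x (s₀ + k)) (κ (x (s₀ + k))) := by
        rw [hdyn (s₀ + k), if_pos ⟨s₀, Nat.le_add_right _ _, hs₀⟩]
      rw [← Nat.add_assoc, this, ih, Function.iterate_succ_apply']
  -- Step 3: convergence from x s₀ ∈ D
  have htend : Filter.Tendsto (fun k => x (s₀ + k)) Filter.atTop (nhds 0) := by
    have := hattr (x s₀) (hΩD hs₀)
    refine this.congr fun k => ?_
    exact (hiter k).symm
  have : Filter.Tendsto (fun k => x (k + s₀)) Filter.atTop (nhds 0) := by
    refine htend.congr fun k => by rw [Nat.add_comm]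
  exact (Filter.tendsto_add_atTop_iff_nat s₀).mp this
end

section
/- If V : X → ℝ≥0 satisfies |V(y) − J*(y)| ≤ ε(M) for all y with V(y) ≤ M, where ε(M) → 0 as M → 0, and J^M(x) denotes the free-final-time value with terminal cost max(V(·), M), then under the finite-hitting-time and DP-principle hypotheses, |J^M(x) − J*(x)| ≤ ε(M) + M, and hence J^M(x) → J*(x) as M → 0. -/
/-- Free-final-time value with terminal cost `max (V ·) M`. -/
noncomputable def valM {X U : Type*} (f : X → U → X) (c : X → U → ℝ) (V : X → ℝ)
    (M : ℝ) (x : X) : ℝ :=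
  sInf (Set.range fun p : ℕ × (ℕ → U) => cost f c (fun y => max (V y) M) x p.2 p.1)

/-- If `V` approximates `J*` within `ε(M)` on the sublevel set `{V ≤ M}`, with
`ε(M) → 0` as `M → 0`, then under the finite-hitting-time and dynamic-programming
hypotheses, `|J^M(x) − J*(x)| ≤ ε(M) + M`, and hence `J^M(x) → J*(x)` as `M → 0⁺`. -/
theorem stmt_15 {X U : Type*} [Nonempty U]
    (f : X → U → X) (c : X → U → ℝ) (V : X → ℝ) (Jstar : X → ℝ) (ε : ℝ → ℝ)
    (hc_nonneg : ∀ x u, 0 ≤ c x u) (hV : ∀ x, 0 ≤ V x) (hJstar : ∀ x, 0 ≤ Jstar x)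
    (hDP : ∀ y T, Jstar y = val f c Jstar y T)
    (happrox : ∀ M > (0 : ℝ), ∀ y, V y ≤ M → |V y - Jstar y| ≤ ε M)
    (hεlim : Filter.Tendsto ε (nhdsWithin 0 (Set.Ioi 0)) (nhds 0))
    (x : X)
    (hhit : ∀ M > (0 : ℝ), ∃ (T : ℕ) (u : ℕ → U),
      cost f c (fun y => max (V y) M) x u T = valM f c V M x ∧ V (traj f x u T) ≤ M)
    (hstarhit : ∀ M > (0 : ℝ), ∃ ustar : ℕ → U,
      (∀ T : ℕ, (∑ t ∈ Finset.range T, c (traj f x ustar t) (ustar t))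
          + Jstar (traj f x ustar T) = Jstar x) ∧
      ∃ T : ℕ, V (traj f x ustar T) ≤ M) :
    (∀ M > (0 : ℝ), |valM f c V M x - Jstar x| ≤ ε M + M) ∧
    Filter.Tendsto (fun M => valM f c V M x) (nhdsWithin 0 (Set.Ioi 0))
      (nhds (Jstar x)) := by
  have key : ∀ M > (0:ℝ), |valM f c V M x - Jstar x| ≤ ε M + M := by
    intro M hM
    obtain ⟨T, u, hcost, hVT⟩ := hhit M hM
    obtain ⟨ustar, hBellman, T', hVT'⟩ := hstarhit M hM
    have hε0 : 0 ≤ ε M := le_trans (abs_nonneg _) (happrox M hM _ hVT)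
    have hbdd1 : BddBelow (Set.range fun p : ℕ × (ℕ → U) =>
        cost f c (fun y => max (V y) M) x p.2 p.1) := by
      refine ⟨0, ?_⟩
      rintro r ⟨p, rfl⟩
      have h1 : (0:ℝ) ≤ max (V (traj f x p.2 p.1)) M := le_max_of_le_right hM.le
      have hsum : 0 ≤ ∑ t ∈ Finset.range p.1, c (traj f x p.2 t) (p.2 t) :=
        Finset.sum_nonneg fun t _ => hc_nonneg _ _
      simpa [cost] using add_nonneg hsum h1
    have hupper : valM f c V M x ≤ Jstar x + M := by
      have h1 : valM f c V M x ≤ cost f c (fun y => max (V y) M) x ustar T' :=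
        csInf_le hbdd1 ⟨(T', ustar), rfl⟩
      have h2 : cost f c (fun y => max (V y) M) x ustar T'
          = (∑ t ∈ Finset.range T', c (traj f x ustar t) (ustar t)) + M := by
        simp [cost, max_eq_right hVT']
      have h3 := hBellman T'
      have h4 := hJstar (traj f x ustar T')
      rw [h2] at h1
      linarith
    have hbdd2 : BddBelow (Set.range fun v : ℕ → U => cost f c Jstar x v T) := by
      refine ⟨0, ?_⟩
      rintro r ⟨v, rfl⟩
      exact add_nonneg (Finset.sum_nonneg fun t _ => hc_nonneg _ _) (hJstar _)
    have hlow : Jstar x - ε M ≤ valM f c V M x := by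
      have hJ : Jstar x ≤ (∑ t ∈ Finset.range T, c (traj f x u t) (u t))
          + Jstar (traj f x u T) := by
        rw [hDP x T]
        exact csInf_le hbdd2 ⟨u, rfl⟩
      have happ := abs_le.mp (happrox M hM _ hVT)
      have hmax : V (traj f x u T) ≤ max (V (traj f x u T)) M := le_max_left _ _
      have hc' : valM f c V M x = (∑ t ∈ Finset.range T, c (traj f x u t) (u t))
          + max (V (traj f x u T)) M := by rw [← hcost]; rfl
      have h5 := happ.1
      have h6 := happ.2
      linarith
    rw [abs_le]
    constructor <;> linarith
  refine ⟨key, ?_⟩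
  have hid : Filter.Tendsto (fun M : ℝ => M) (nhdsWithin 0 (Set.Ioi 0)) (nhds 0) :=
    Filter.Tendsto.mono_left Filter.tendsto_id nhdsWithin_le_nhds
  have hg : Filter.Tendsto (fun M => ε M + M) (nhdsWithin 0 (Set.Ioi 0)) (nhds 0) := by
    simpa using hεlim.add hid
  have hev : ∀ᶠ M in nhdsWithin 0 (Set.Ioi 0),
      ‖valM f c V M x - Jstar x‖ ≤ ε M + M := by
    filter_upwards [self_mem_nhdsWithin] with M hMmem
    simpa [Real.norm_eq_abs] using key M hMmem
  have h0 : Filter.Tendsto (fun M => valM f c V M x - Jstar x)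
      (nhdsWithin 0 (Set.Ioi 0)) (nhds 0) := squeeze_zero_norm' hev hg
  have := h0.add_const (Jstar x)
  simpa using this
end
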